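/- Let k ≥ 2 and m ≥ 1, and let H*_m be the k-graph on {1,…,km} with edge set E_m defined by E_0 = ∅ and E_m = E_{m-1} ∪ { E : |E| = k, E ∩ M_m ≠ ∅, km ∉ E } ∪ {M_m}, where M_i = {k(i-1)+1,…,ki}. Then |E_m| = f(k,m) = m + Σ_{ℓ=2}^{k} b_{k,ℓ} C(m,ℓ), where b_{k,ℓ} = ((ℓ-1)/ℓ) Σ_{i=0}^{ℓ-1} (-1)^i C(ℓ,i) C(k(ℓ-i),k). -/

import Mathlib

open Finset

def Mset (k i : ℕ) : Finset ℕ := Finset.Icc (k * (i - 1) + 1) (k * i)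

def Edges (k : ℕ) : ℕ → Finset (Finset ℕ)
  | 0 => ∅
  | m + 1 =>
      Edges k m ∪
        ((Finset.Icc 1 (k * (m + 1))).powersetCard k).filter
          (fun E => (E ∩ Mset k (m + 1)).Nonempty ∧ k * (m + 1) ∉ E) ∪
        {Mset k (m + 1)}

def b (k l : ℕ) : ℚ :=
  ((l - 1 : ℚ) / l) *
    ∑ i ∈ Finset.range l, (-1 : ℚ) ^ i * (l.choose i) * ((k * (l - i)).choose k)

def f (k m : ℕ) : ℚ := m + ∑ l ∈ Finset.Icc 2 k, b k l * (m.choose l)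

def Tq (k l : ℕ) : ℚ :=
  ∑ i ∈ Finset.range l, (-1 : ℚ) ^ i * ((l - 1).choose i) * ((k * (l - i) - 1).choose (k - 1))


lemma edges_subset (k : ℕ) (hk : 1 ≤ k) :
    ∀ m, ∀ E ∈ Edges k m, E ⊆ Finset.Icc 1 (k * m) := by
  intro m
  induction m with
  | zero => intro E hE; simp [Edges] at hE
  | succ m ih =>
    intro E hE
    simp only [Edges, Finset.mem_union, Finset.mem_singleton] at hE
    rcases hE with (hE | hE) | hE
    · exact (ih E hE).trans (Finset.Icc_subset_Icc le_rfl (by nlinarith))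
    · rw [Finset.mem_filter, Finset.mem_powersetCard] at hE
      exact hE.1.1
    · subst hE
      exact Finset.Icc_subset_Icc (by omega) le_rfl

lemma filter_card (k m : ℕ) (hk : 1 ≤ k) :
    ((((Finset.Icc 1 (k * (m + 1))).powersetCard k).filter
        (fun E => (E ∩ Mset k (m + 1)).Nonempty ∧ k * (m + 1) ∉ E)).card)
      = (k * m + k - 1).choose k - (k * m).choose k := by
  have hkm : k * (m + 1) = k * m + k := by ring
  set a := k * m with ha
  have hEq : (((Finset.Icc 1 (k * (m + 1))).powersetCard k).filter
        (fun E => (E ∩ Mset k (m + 1)).Nonempty ∧ k * (m + 1) ∉ E))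
      = ((Finset.Icc 1 (a + k - 1)).powersetCard k) \ ((Finset.Icc 1 a).powersetCard k) := by
    ext E
    simp only [Finset.mem_filter, Finset.mem_powersetCard, Finset.mem_sdiff, Mset,
      Nat.add_sub_cancel, hkm]
    constructor
    · rintro ⟨⟨hsub, hcard⟩, ⟨x, hx⟩, hnotin⟩
      refine ⟨⟨fun y hy => ?_, hcard⟩, fun h => ?_⟩
      · have := hsub hy
        rw [Finset.mem_Icc] at this ⊢
        have : y ≠ a + k := fun h => hnotin (h ▸ hy)
        omega
      · rw [Finset.mem_inter, Finset.mem_Icc] at hx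
        have := h.1 hx.1
        rw [Finset.mem_Icc] at this
        omega
    · rintro ⟨⟨hsub, hcard⟩, hnot⟩
      have hne : ¬ E ⊆ Finset.Icc 1 a := fun h => hnot ⟨h, hcard⟩
      obtain ⟨y, hyE, hy⟩ := Finset.not_subset.mp hne
      refine ⟨⟨hsub.trans (Finset.Icc_subset_Icc le_rfl (by omega)), hcard⟩, ⟨y, ?_⟩, fun h => ?_⟩
      · have h1 := hsub hyE
        rw [Finset.mem_Icc] at h1
        rw [Finset.mem_inter, Finset.mem_Icc]
        rw [Finset.mem_Icc] at hy
        exact ⟨hyE, by omega, by omega⟩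
      · have := hsub h
        rw [Finset.mem_Icc] at this
        omega
  rw [hEq, Finset.card_sdiff_of_subset
    (Finset.powersetCard_mono (Finset.Icc_subset_Icc le_rfl (by omega)))]
  rw [Finset.card_powersetCard, Finset.card_powersetCard, Nat.card_Icc, Nat.card_Icc]
  congr 1 <;> congr 1 <;> omega

lemma card_step (k m : ℕ) (hk : 1 ≤ k) :
    (Edges k (m + 1)).card
      = (Edges k m).card + ((k * m + k - 1).choose k - (k * m).choose k) + 1 := by
  have hkm : k * (m + 1) = k * m + k := by ring
  set F := (((Finset.Icc 1 (k * (m + 1))).powersetCard k).filter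
      (fun E => (E ∩ Mset k (m + 1)).Nonempty ∧ k * (m + 1) ∉ E)) with hF
  have hmemM : k * (m + 1) ∈ Mset k (m + 1) := by
    simp only [Mset, Nat.add_sub_cancel, Finset.mem_Icc]
    omega
  have hd1 : Disjoint (Edges k m) F := by
    rw [Finset.disjoint_left]
    intro E hE hEF
    rw [hF, Finset.mem_filter] at hEF
    obtain ⟨x, hx⟩ := hEF.2.1
    rw [Finset.mem_inter] at hx
    have h1 := edges_subset k hk m E hE hx.1
    have h2 := hx.2
    simp only [Mset, Nat.add_sub_cancel, Finset.mem_Icc] at h1 h2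
    omega
  have hd2 : Disjoint (Edges k m ∪ F) {Mset k (m + 1)} := by
    rw [Finset.disjoint_right]
    intro E hE hEF
    rw [Finset.mem_singleton] at hE
    subst hE
    rw [Finset.mem_union] at hEF
    rcases hEF with h | h
    · have := edges_subset k hk m _ h hmemM
      rw [Finset.mem_Icc] at this
      omega
    · rw [hF, Finset.mem_filter] at h
      exact h.2.2 hmemM
  show (Edges k m ∪ F ∪ {Mset k (m+1)}).card = _
  rw [Finset.card_union_of_disjoint hd2, Finset.card_union_of_disjoint hd1,
    Finset.card_singleton, filter_card k m hk]

lemma gq_cast (k m : ℕ) (hk : 1 ≤ k) :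
    (((k * m + k - 1).choose k - (k * m).choose k : ℕ) : ℚ)
      = ((k * m + k - 1).choose k : ℚ) - ((k * m).choose k : ℚ) := by
  have h0 : k * m ≤ k * m + k - 1 := by set t := k * m; omega
  exact Nat.cast_sub (Nat.choose_le_choose k h0)

def gq (k : ℕ) : ℕ → ℚ := fun x => ((k * x + k - 1).choose k : ℚ) - ((k * x).choose k : ℚ)

lemma card_edges (k : ℕ) (hk : 1 ≤ k) (m : ℕ) :
    ((Edges k m).card : ℚ) = m + ∑ x ∈ Finset.range m, gq k x := by
  induction m with
  | zero => simp [Edges]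
  | succ m ih =>
    rw [card_step k m hk]
    push_cast [gq_cast k m hk]
    rw [Finset.sum_range_succ, ih]
    simp [gq]
    ring

lemma refl_sum (F : ℕ → ℚ) (n : ℕ) :
    (fwdDiff 1)^[n] F 0 = ∑ i ∈ Finset.range (n + 1), (-1 : ℚ) ^ i * (n.choose i) * F (n - i) := by
  rw [fwdDiff_iter_eq_sum_shift]
  rw [← Finset.sum_range_reflect (fun i => (-1 : ℚ) ^ i * (n.choose i) * F (n - i)) (n + 1)]
  apply Finset.sum_congr rfl
  intro j hj
  rw [Finset.mem_range] at hj
  have hj' : j ≤ n := by omega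
  have h1 : n + 1 - 1 - j = n - j := by omega
  have h2 : n - (n - j) = j := by omega
  rw [h1, h2, Nat.choose_symm hj']
  have : j • (1 : ℕ) = j := by simp
  rw [zero_add, this, zsmul_eq_mul]
  push_cast
  ring

lemma newton (F : ℕ → ℚ) (m : ℕ) :
    F m = ∑ j ∈ Finset.range (m + 1), (m.choose j : ℚ) * (fwdDiff 1)^[j] F 0 := by
  have h := shift_eq_sum_fwdDiff_iter (1 : ℕ) F m 0
  simp only [zero_add, smul_eq_mul, mul_one, nsmul_eq_mul] at h
  exact_mod_cast h

lemma choose_key (k N : ℕ) (hk : 1 ≤ k) (hN : 1 ≤ N) :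
    N.choose k * k = N * ((N - 1).choose (k - 1)) := by
  have h := Nat.add_one_mul_choose_eq (N - 1) (k - 1)
  have h1 : N - 1 + 1 = N := by omega
  have h2 : k - 1 + 1 = k := by omega
  simp only [Nat.succ_eq_add_one, h1, h2] at h
  omega

lemma term_key (k l i : ℕ) (hk : 1 ≤ k) (hi : i < l) :
    l.choose i * ((k * (l - i)).choose k)
      = l * ((l - 1).choose i) * ((k * (l - i) - 1).choose (k - 1)) := by
  have hli : 1 ≤ l - i := by omega
  set N := k * (l - i) with hNdef
  have hN : 1 ≤ N := Nat.one_le_iff_ne_zero.mpr (by positivity)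
  have h2 := choose_key k N hk hN
  have h1 : l.choose i * (l - i) = l * ((l - 1).choose i) := by
    have hs := Nat.add_one_mul_choose_eq (l - 1) (l - 1 - i)
    have e1 : l - 1 + 1 = l := by omega
    have e2 : l - 1 - i + 1 = l - i := by omega
    simp only [Nat.succ_eq_add_one, e1, e2] at hs
    rw [Nat.choose_symm (by omega : i ≤ l - 1), Nat.choose_symm (by omega : i ≤ l)] at hs
    omega
  apply Nat.eq_of_mul_eq_mul_left (show 0 < k by omega)
  calc k * (l.choose i * (N.choose k))
      = l.choose i * (N.choose k * k) := by ring
    _ = l.choose i * (N * ((N - 1).choose (k - 1))) := by rw [h2]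
    _ = (l.choose i * (l - i)) * k * ((N - 1).choose (k - 1)) := by rw [hNdef]; ring
    _ = (l * ((l - 1).choose i)) * k * ((N - 1).choose (k - 1)) := by rw [h1]
    _ = k * (l * ((l - 1).choose i) * ((N - 1).choose (k - 1))) := by ring

lemma S_eq (k n : ℕ) (hk : 1 ≤ k) :
    ∑ i ∈ Finset.range (n + 1), (-1 : ℚ) ^ i * ((n + 1).choose i) * ((k * (n + 1 - i)).choose k)
      = (n + 1) * Tq k (n + 1) := by
  rw [Tq, Finset.mul_sum]
  apply Finset.sum_congr rfl
  intro i hi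
  rw [Finset.mem_range] at hi
  have h := term_key k (n + 1) i hk hi
  have hc : (((n+1).choose i : ℕ) : ℚ) * ((k * (n + 1 - i)).choose k : ℕ)
      = ((n + 1 : ℕ) : ℚ) * (((n + 1 - 1).choose i : ℕ)) * (((k * (n + 1 - i) - 1).choose (k-1) : ℕ)) := by
    exact_mod_cast congrArg (Nat.cast : ℕ → ℚ) h
  simp only [Nat.add_sub_cancel] at hc
  push_cast at hc ⊢
  linear_combination ((-1 : ℚ)) ^ i * hc

lemma b_eq (k n : ℕ) (hk : 1 ≤ k) : b k (n + 1) = (n : ℚ) * Tq k (n + 1) := by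
  rw [b, S_eq k n hk]
  have h : ((n : ℚ) + 1) ≠ 0 := by positivity
  push_cast
  field_simp
  ring

lemma chain2 (k n : ℕ) (hk : 1 ≤ k) :
    ∑ i ∈ Finset.range (n + 1), (-1 : ℚ) ^ i * (n.choose i) * gq k (n - i)
      = (n : ℚ) * Tq k (n + 1) := by
  have hNpos : ∀ i, i ≤ n → 1 ≤ k * (n + 1 - i) := by
    intro i hi
    have : 1 ≤ n + 1 - i := by omega
    calc 1 = 1 * 1 := by ring
    _ ≤ k * (n + 1 - i) := Nat.mul_le_mul hk this
  -- step 1 : LHS = V - W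
  have step1 : ∑ i ∈ Finset.range (n + 1), (-1 : ℚ) ^ i * (n.choose i) * gq k (n - i)
      = (∑ i ∈ Finset.range (n + 1), (-1 : ℚ) ^ i * (n.choose i) * (((k * (n + 1 - i) - 1).choose k : ℕ) : ℚ))
        - ∑ i ∈ Finset.range (n + 1), (-1 : ℚ) ^ i * (n.choose i) * (((k * (n - i)).choose k : ℕ) : ℚ) := by
    rw [← Finset.sum_sub_distrib]
    apply Finset.sum_congr rfl
    intro i hi
    rw [Finset.mem_range] at hi
    have e1 : k * (n - i) + k - 1 = k * (n + 1 - i) - 1 := by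
      have h1 : n + 1 - i = (n - i) + 1 := by omega
      rw [h1, Nat.mul_add, Nat.mul_one]
    simp only [gq, e1]
    ring
  -- step 2 : A = V + T
  have step2 : ∑ i ∈ Finset.range (n + 1), (-1 : ℚ) ^ i * (n.choose i) * (((k * (n + 1 - i)).choose k : ℕ) : ℚ)
      = (∑ i ∈ Finset.range (n + 1), (-1 : ℚ) ^ i * (n.choose i) * (((k * (n + 1 - i) - 1).choose k : ℕ) : ℚ))
        + Tq k (n + 1) := by
    rw [Tq, ← Finset.sum_add_distrib]
    apply Finset.sum_congr rfl
    intro i hi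
    rw [Finset.mem_range] at hi
    have hN := hNpos i (by omega)
    have pascal : (k * (n + 1 - i)).choose k
        = (k * (n + 1 - i) - 1).choose (k - 1) + (k * (n + 1 - i) - 1).choose k := by
      have e1 : k * (n + 1 - i) = (k * (n + 1 - i) - 1) + 1 := by omega
      have e2 : k = (k - 1) + 1 := by omega
      calc (k * (n + 1 - i)).choose k
          = ((k * (n + 1 - i) - 1) + 1).choose ((k - 1) + 1) := by rw [← e1, ← e2]
        _ = (k * (n + 1 - i) - 1).choose (k - 1) + (k * (n + 1 - i) - 1).choose ((k - 1) + 1) :=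
            Nat.choose_succ_succ _ _
        _ = (k * (n + 1 - i) - 1).choose (k - 1) + (k * (n + 1 - i) - 1).choose k := by rw [← e2]
    simp only [Nat.add_sub_cancel]
    rw [pascal]
    push_cast
    ring
  -- step 3 : A - S = W
  have step3 : (∑ i ∈ Finset.range (n + 1), (-1 : ℚ) ^ i * (n.choose i) * (((k * (n + 1 - i)).choose k : ℕ) : ℚ))
      - (∑ i ∈ Finset.range (n + 1), (-1 : ℚ) ^ i * ((n + 1).choose i) * (((k * (n + 1 - i)).choose k : ℕ) : ℚ))
      = ∑ i ∈ Finset.range (n + 1), (-1 : ℚ) ^ i * (n.choose i) * (((k * (n - i)).choose k : ℕ) : ℚ) := by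
    rw [Finset.sum_range_succ'
      (fun i => (-1 : ℚ) ^ i * (n.choose i) * (((k * (n + 1 - i)).choose k : ℕ) : ℚ)) n]
    rw [Finset.sum_range_succ'
      (fun i => (-1 : ℚ) ^ i * ((n + 1).choose i) * (((k * (n + 1 - i)).choose k : ℕ) : ℚ)) n]
    rw [Finset.sum_range_succ
      (fun i => (-1 : ℚ) ^ i * (n.choose i) * (((k * (n - i)).choose k : ℕ) : ℚ)) n]
    have hlast : (-1 : ℚ) ^ n * (n.choose n) * (((k * (n - n)).choose k : ℕ) : ℚ) = 0 := by
      simp [Nat.sub_self, Nat.choose_eq_zero_of_lt (show 0 < k by omega)]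
    rw [hlast, add_zero]
    simp only [Nat.succ_sub_succ_eq_sub, Nat.choose_zero_right, pow_zero, Nat.cast_one,
      Nat.sub_zero]
    rw [add_sub_add_right_eq_sub, ← Finset.sum_sub_distrib]
    apply Finset.sum_congr rfl
    intro x hx
    have hp : (((n + 1).choose (x + 1) : ℕ) : ℚ) = (n.choose x : ℚ) + (n.choose (x + 1) : ℚ) := by
      exact_mod_cast congrArg (Nat.cast : ℕ → ℚ) (Nat.choose_succ_succ n x)
    rw [hp]
    ring
  rw [step1, ← step3, step2, S_eq k n hk]
  ring

lemma dd_zero_fun (n : ℕ) : (fwdDiff (1:ℕ))^[n] (fun _ : ℕ => (0:ℚ)) = fun _ => 0 := by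
  apply Function.iterate_fixed
  funext x
  simp [fwdDiff]

lemma poly_vanish : ∀ (n : ℕ) (P : Polynomial ℚ), P.natDegree < n →
    (fwdDiff 1)^[n] (fun x : ℕ => P.eval (x : ℚ)) = fun _ => 0 := by
  intro n
  induction n with
  | zero => intro P h; exact absurd h (Nat.not_lt_zero _)
  | succ n ih =>
    intro P hP
    rw [Function.iterate_succ_apply]
    have hQ : fwdDiff 1 (fun x : ℕ => P.eval (x : ℚ))
        = fun x : ℕ => (Polynomial.taylor 1 P - P).eval (x : ℚ) := by
      funext x
      simp only [fwdDiff, Polynomial.eval_sub, Polynomial.taylor_eval]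
      push_cast
      ring_nf
    rw [hQ]
    by_cases h0 : P.natDegree = 0
    · obtain ⟨c, rfl⟩ := Polynomial.natDegree_eq_zero.mp h0
      have hz : Polynomial.taylor (1:ℚ) (Polynomial.C c) - Polynomial.C c = 0 := by
        simp [Polynomial.taylor_C]
      rw [hz]
      simp only [Polynomial.eval_zero]
      exact dd_zero_fun n
    · apply ih
      have hPne : P ≠ 0 := fun h => h0 (h ▸ Polynomial.natDegree_zero)
      by_cases hQ0 : Polynomial.taylor (1:ℚ) P - P = 0
      · rw [hQ0]
        simp only [Polynomial.natDegree_zero]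
        omega
      · have htne : Polynomial.taylor (1:ℚ) P ≠ 0 := by
          intro h
          apply h0
          have := Polynomial.natDegree_taylor P (1:ℚ)
          rw [h, Polynomial.natDegree_zero] at this
          omega
        have hdd : (Polynomial.taylor (1:ℚ) P).degree = P.degree := by
          rw [Polynomial.degree_eq_natDegree htne, Polynomial.degree_eq_natDegree hPne,
            Polynomial.natDegree_taylor]
        have hdeg : (Polynomial.taylor (1:ℚ) P - P).degree < P.degree := by
          rw [← hdd]
          apply Polynomial.degree_sub_lt hdd htne
          rw [Polynomial.taylor_apply, Polynomial.leadingCoeff_comp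
            (by rw [Polynomial.natDegree_X_add_C]; omega : (Polynomial.X + Polynomial.C (1:ℚ)).natDegree ≠ 0)]
          rw [(Polynomial.monic_X_add_C (1:ℚ)).leadingCoeff, one_pow, mul_one]
        have hlt : (Polynomial.taylor (1:ℚ) P - P).natDegree < P.natDegree := by
          have hd := Polynomial.degree_eq_natDegree hQ0
          have hd2 := Polynomial.degree_eq_natDegree hPne
          rw [hd, hd2] at hdeg
          exact_mod_cast hdeg
        omega

lemma phi_poly (k : ℕ) (hk : 1 ≤ k) : ∃ P : Polynomial ℚ, P.natDegree < k ∧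
    ∀ x : ℕ, (((k * x + k - 1).choose (k - 1) : ℕ) : ℚ) = P.eval (x : ℚ) := by
  classical
  refine ⟨Polynomial.C (((Nat.factorial (k-1) : ℕ) : ℚ)⁻¹) *
    ∏ t ∈ Finset.range (k - 1),
      (Polynomial.C (k : ℚ) * Polynomial.X + Polynomial.C (((k - 1 - t : ℕ) : ℚ))), ?_, ?_⟩
  · have h1 : (∏ t ∈ Finset.range (k - 1),
        (Polynomial.C (k : ℚ) * Polynomial.X + Polynomial.C (((k - 1 - t : ℕ) : ℚ)))).natDegree
        ≤ k - 1 := by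
      refine le_trans (Polynomial.natDegree_prod_le _ _) ?_
      calc ∑ t ∈ Finset.range (k-1),
          (Polynomial.C (k : ℚ) * Polynomial.X + Polynomial.C (((k - 1 - t : ℕ) : ℚ))).natDegree
          ≤ ∑ _t ∈ Finset.range (k-1), 1 := by
            apply Finset.sum_le_sum
            intro t _
            refine le_trans (Polynomial.natDegree_add_le _ _) ?_
            simp only [Polynomial.natDegree_C, max_le_iff]
            constructor
            · exact le_trans (Polynomial.natDegree_C_mul_le _ _) (le_of_eq Polynomial.natDegree_X)
            · omega
        _ = k - 1 := by simp
    have h2 := Polynomial.natDegree_C_mul_le (((Nat.factorial (k-1) : ℕ) : ℚ)⁻¹)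
      (∏ t ∈ Finset.range (k - 1),
        (Polynomial.C (k : ℚ) * Polynomial.X + Polynomial.C (((k - 1 - t : ℕ) : ℚ))))
    omega
  · intro x
    have hnat : Nat.factorial (k - 1) * ((k * x + k - 1).choose (k - 1))
        = ∏ t ∈ Finset.range (k - 1), (k * x + (k - 1 - t)) := by
      rw [← Nat.descFactorial_eq_factorial_mul_choose, Nat.descFactorial_eq_prod_range]
      apply Finset.prod_congr rfl
      intro t ht
      rw [Finset.mem_range] at ht
      set y := k * x
      omega
    have hcast : ((∏ t ∈ Finset.range (k - 1), (k * x + (k - 1 - t)) : ℕ) : ℚ)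
        = ∏ t ∈ Finset.range (k - 1), ((k : ℚ) * (x : ℚ) + (((k - 1 - t : ℕ) : ℚ))) := by
      push_cast
      rfl
    rw [Polynomial.eval_mul, Polynomial.eval_C, Polynomial.eval_prod]
    simp only [Polynomial.eval_add, Polynomial.eval_mul, Polynomial.eval_C, Polynomial.eval_X]
    rw [← hcast]
    rw [← hnat]
    have hfac : ((Nat.factorial (k-1) : ℕ) : ℚ) ≠ 0 := by
      exact_mod_cast Nat.factorial_ne_zero (k-1)
    push_cast
    field_simp

lemma Tq_vanish (k l : ℕ) (hk : 1 ≤ k) (hl : k + 1 ≤ l) : Tq k l = 0 := by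
  obtain ⟨n, rfl⟩ : ∃ n, l = n + 1 := ⟨l - 1, by omega⟩
  obtain ⟨P, hPdeg, hPeval⟩ := phi_poly k hk
  have hTq : Tq k (n + 1) = (fwdDiff 1)^[n] (fun x : ℕ => (((k * x + k - 1).choose (k - 1) : ℕ) : ℚ)) 0 := by
    rw [refl_sum]
    rw [Tq]
    apply Finset.sum_congr rfl
    intro i hi
    rw [Finset.mem_range] at hi
    have e1 : k * (n - i) + k - 1 = k * (n + 1 - i) - 1 := by
      have h1 : n + 1 - i = (n - i) + 1 := by omega
      rw [h1, Nat.mul_add, Nat.mul_one]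
    simp only [Nat.add_sub_cancel, e1]
  have hfun : (fun x : ℕ => (((k * x + k - 1).choose (k - 1) : ℕ) : ℚ))
      = fun x : ℕ => P.eval (x : ℚ) := by
    funext x; exact hPeval x
  rw [hTq, hfun, poly_vanish n P (by omega)]

lemma b_vanish (k l : ℕ) (hk : 1 ≤ k) (hl : k + 1 ≤ l) : b k l = 0 := by
  obtain ⟨n, rfl⟩ : ∃ n, l = n + 1 := ⟨l - 1, by omega⟩
  rw [b_eq k n hk, Tq_vanish k (n + 1) hk hl, mul_zero]

lemma gq_zero (k : ℕ) (hk : 1 ≤ k) : gq k 0 = 0 := by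
  have h1 : (k - 1).choose k = 0 := Nat.choose_eq_zero_of_lt (by omega)
  have h2 : (0 : ℕ).choose k = 0 := Nat.choose_eq_zero_of_lt (by omega)
  simp [gq, h1, h2]

lemma dd_gq (k j : ℕ) (hk : 1 ≤ k) :
    (fwdDiff 1)^[j] (gq k) 0 = b k (j + 1) := by
  rw [refl_sum (gq k) j, chain2 k j hk, b_eq k j hk]

lemma key_identity (k m : ℕ) (hk : 2 ≤ k) :
    gq k m = ∑ l ∈ Finset.Icc 2 k, b k l * ((m.choose (l - 1) : ℚ)) := by
  have hk1 : 1 ≤ k := by omega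
  set M := max (k - 1) m with hM
  have lhs1 : gq k m = ∑ i ∈ Finset.range M, b k (i + 2) * ((m.choose (i + 1) : ℚ)) := by
    rw [newton (gq k) m]
    have e1 : ∑ j ∈ Finset.range (m + 1), (m.choose j : ℚ) * (fwdDiff 1)^[j] (gq k) 0
        = ∑ j ∈ Finset.range (m + 1), (m.choose j : ℚ) * b k (j + 1) := by
      apply Finset.sum_congr rfl
      intro j _
      rw [dd_gq k j hk1]
    rw [e1, Finset.sum_range_succ' (fun j => (m.choose j : ℚ) * b k (j + 1)) m]
    have hb1 : b k 1 = 0 := by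
      simp [b]
    simp only [Nat.choose_zero_right, Nat.cast_one, one_mul, hb1, add_zero]
    have e2 : ∑ i ∈ Finset.range m, (m.choose (i + 1) : ℚ) * b k (i + 1 + 1)
        = ∑ i ∈ Finset.range m, b k (i + 2) * ((m.choose (i + 1) : ℚ)) := by
      apply Finset.sum_congr rfl
      intro i _
      ring_nf
    rw [e2]
    apply Finset.sum_subset
    · apply Finset.range_subset_range.mpr
      omega
    · intro i _ hi
      rw [Finset.mem_range, not_lt] at hi
      have : m.choose (i + 1) = 0 := Nat.choose_eq_zero_of_lt (by omega)
      rw [this]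
      push_cast
      ring
  have rhs1 : ∑ l ∈ Finset.Icc 2 k, b k l * ((m.choose (l - 1) : ℚ))
      = ∑ i ∈ Finset.range M, b k (i + 2) * ((m.choose (i + 1) : ℚ)) := by
    rw [← Finset.Ico_add_one_right_eq_Icc, Finset.sum_Ico_eq_sum_range
      (fun l => b k l * ((m.choose (l - 1) : ℚ))) 2 (k + 1)]
    have e3 : k + 1 - 2 = k - 1 := by omega
    rw [e3]
    have e4 : ∑ i ∈ Finset.range (k - 1), b k (2 + i) * ((m.choose (2 + i - 1) : ℚ))
        = ∑ i ∈ Finset.range (k - 1), b k (i + 2) * ((m.choose (i + 1) : ℚ)) := by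
      apply Finset.sum_congr rfl
      intro i _
      have : 2 + i - 1 = i + 1 := by omega
      rw [this, show 2 + i = i + 2 by omega]
    rw [e4]
    apply Finset.sum_subset
    · apply Finset.range_subset_range.mpr
      omega
    · intro i _ hi
      rw [Finset.mem_range, not_lt] at hi
      rw [b_vanish k (i + 2) hk1 (by omega), zero_mul]
  rw [lhs1, rhs1]

theorem stmt_8 (k m : ℕ) (hk : 2 ≤ k) (hm : 1 ≤ m) :
    ((Edges k m).card : ℚ) = f k m := by
  clear hm
  induction m with
  | zero =>
    have hz : f k 0 = 0 := by
      rw [f]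
      have : ∑ l ∈ Finset.Icc 2 k, b k l * (((0 : ℕ).choose l : ℕ) : ℚ) = 0 := by
        apply Finset.sum_eq_zero
        intro l hl
        rw [Finset.mem_Icc] at hl
        rw [Nat.choose_eq_zero_of_lt (by omega)]
        push_cast
        ring
      rw [this]
      simp
    rw [hz]
    simp [Edges]
  | succ m ih =>
    have hk1 : 1 ≤ k := by omega
    rw [card_step k m hk1]
    push_cast [gq_cast k m hk1]
    rw [ih]
    have pascal_sum : ∑ l ∈ Finset.Icc 2 k, b k l * (((m + 1).choose l : ℕ) : ℚ)
        = ∑ l ∈ Finset.Icc 2 k, b k l * ((m.choose l : ℕ) : ℚ)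
          + ∑ l ∈ Finset.Icc 2 k, b k l * ((m.choose (l - 1) : ℕ) : ℚ) := by
      rw [← Finset.sum_add_distrib]
      apply Finset.sum_congr rfl
      intro l hl
      rw [Finset.mem_Icc] at hl
      have e : l - 1 + 1 = l := by omega
      have hp : (((m + 1).choose l : ℕ) : ℚ)
          = ((m.choose (l - 1) : ℕ) : ℚ) + ((m.choose l : ℕ) : ℚ) := by
        rw [← e]
        exact_mod_cast congrArg (Nat.cast : ℕ → ℚ) (Nat.choose_succ_succ m (l - 1))
      rw [hp]
      ring
    have hgq := key_identity k m hk
    rw [f, f, pascal_sum, ← hgq, gq]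
    push_cast
    ring
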